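/- Let u : ℝ × ℝ → ℝ be sufficiently smooth and satisfy the linear heat equation u_t = u_xx at every point. Then for every real ε, the function v(t,x) := (1+4εt)^{−1/2} · exp(−εx²/(1+4εt)) · u( t/(1+4εt), x/(1+4εt) ), defined on the set {(t,x) : 1+4εt > 0}, satisfies v_t = v_xx at every point of that set. (This is the finite projective transformation generated by the symmetry X₅ = 4t² ∂t + 4tx ∂x − (x² + 2t)u ∂u of the linear heat equation. In particular, taking u ≡ C constant and ε = 1/(4t₀) gives the exact solution u(t,x) = C (t₀/(t+t₀))^{1/2} exp(−x²/(4(t+t₀))).) -/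

import Mathlib

set_option maxHeartbeats 1000000

noncomputable section

/-- Partial derivative with respect to the first variable (time). -/
def pdT (f : ℝ × ℝ → ℝ) (t x : ℝ) : ℝ := deriv (fun s => f (s, x)) t

/-- Partial derivative with respect to the second variable (space). -/
def pdX (f : ℝ × ℝ → ℝ) (t x : ℝ) : ℝ := deriv (fun y => f (t, y)) x

def uX (u : ℝ × ℝ → ℝ) (p : ℝ × ℝ) : ℝ := fderiv ℝ u p (0, 1)
def uT (u : ℝ × ℝ → ℝ) (p : ℝ × ℝ) : ℝ := fderiv ℝ u p (1, 0)
def uXX (u : ℝ × ℝ → ℝ) (p : ℝ × ℝ) : ℝ := fderiv ℝ (uX u) p (0, 1)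

lemma lin2 (L : ℝ × ℝ →L[ℝ] ℝ) (a b : ℝ) : L (a, b) = a * L (1, 0) + b * L (0, 1) := by
  have h : ((a, b) : ℝ × ℝ) = a • ((1:ℝ), (0:ℝ)) + b • ((0:ℝ), (1:ℝ)) := by
    simp [Prod.smul_mk]
  rw [h, map_add, map_smul, map_smul]; rfl

lemma slice_t {f : ℝ × ℝ → ℝ} (hf : Differentiable ℝ f) {g h : ℝ → ℝ} {g' h' t : ℝ}
    (hg : HasDerivAt g g' t) (hh : HasDerivAt h h' t) :
    HasDerivAt (fun s => f (g s, h s))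
      (g' * uT f (g t, h t) + h' * uX f (g t, h t)) t := by
  have := (hf (g t, h t)).hasFDerivAt.comp_hasDerivAt t (hg.prodMk hh)
  rwa [lin2] at this

lemma slice_x {f : ℝ × ℝ → ℝ} (hf : Differentiable ℝ f) (τ D x : ℝ) :
    HasDerivAt (fun y => f (τ, y / D)) ((1 / D) * uX f (τ, x / D)) x := by
  have := slice_t hf (hasDerivAt_const x τ) ((hasDerivAt_id x).div_const D)
  simpa using this

lemma pdX_eq {u : ℝ × ℝ → ℝ} (hu : Differentiable ℝ u) (t y : ℝ) :
    pdX u t y = uX u (t, y) := by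
  have := slice_t hu (hasDerivAt_const y t) (hasDerivAt_id y)
  simpa [pdX] using this.deriv

lemma pdT_eq {u : ℝ × ℝ → ℝ} (hu : Differentiable ℝ u) (t x : ℝ) :
    pdT u t x = uT u (t, x) := by
  have := slice_t hu (hasDerivAt_id t) (hasDerivAt_const t x)
  simpa [pdT] using this.deriv

lemma uX_diff {u : ℝ × ℝ → ℝ} (hu : ContDiff ℝ 2 u) : Differentiable ℝ (uX u) := by
  have : ContDiff ℝ 1 (uX u) := (hu.fderiv_right (le_refl _)).clm_apply contDiff_const
  exact this.differentiable one_ne_zero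

theorem projective_symmetry_linear_heat
    (u : ℝ × ℝ → ℝ) (hu : ContDiff ℝ 2 u)
    (heq : ∀ t x : ℝ, pdT u t x = deriv (fun y => pdX u t y) x) :
    ∀ ε : ℝ, ∀ t x : ℝ, 1 + 4 * ε * t > 0 →
      pdT (fun p => (1 + 4 * ε * p.1) ^ (-(1 / 2) : ℝ) *
          Real.exp (-ε * p.2 ^ 2 / (1 + 4 * ε * p.1)) *
          u (p.1 / (1 + 4 * ε * p.1), p.2 / (1 + 4 * ε * p.1))) t x =
        deriv (fun y =>
          pdX (fun p => (1 + 4 * ε * p.1) ^ (-(1 / 2) : ℝ) *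
            Real.exp (-ε * p.2 ^ 2 / (1 + 4 * ε * p.1)) *
            u (p.1 / (1 + 4 * ε * p.1), p.2 / (1 + 4 * ε * p.1))) t y) x := by
  have hud : Differentiable ℝ u := hu.differentiable (by norm_num)
  have huxd : Differentiable ℝ (uX u) := uX_diff hu
  -- heat equation in fderiv form
  have heat : ∀ p : ℝ × ℝ, uT u p = uX (uX u) p := by
    rintro ⟨t, x⟩
    have h1 : (fun y => pdX u t y) = fun y => uX u (t, y) := funext (pdX_eq hud t)
    have h2 := heq t x
    rw [pdT_eq hud, h1] at h2
    have h3 := slice_t huxd (hasDerivAt_const x t) (hasDerivAt_id x)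
    simp only [id_eq] at h3
    rw [h2, h3.deriv]
    simp
  intro ε t x hD
  have hD0 : (1 + 4 * ε * t) ≠ 0 := ne_of_gt hD
  -- Step A: first x-derivative of v at any y
  have stepA : ∀ y : ℝ, HasDerivAt
      (fun y' => (1 + 4 * ε * t) ^ (-(1 / 2) : ℝ) *
        Real.exp (-ε * y' ^ 2 / (1 + 4 * ε * t)) *
        u (t / (1 + 4 * ε * t), y' / (1 + 4 * ε * t)))
      ((1 + 4 * ε * t) ^ (-(1 / 2) : ℝ) * Real.exp (-ε * y ^ 2 / (1 + 4 * ε * t)) *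
        ((-2 * ε * y / (1 + 4 * ε * t)) * u (t / (1 + 4 * ε * t), y / (1 + 4 * ε * t)) +
         (1 / (1 + 4 * ε * t)) * uX u (t / (1 + 4 * ε * t), y / (1 + 4 * ε * t)))) y := by
    intro y
    have hE : HasDerivAt (fun y' => Real.exp (-ε * y' ^ 2 / (1 + 4 * ε * t)))
        (Real.exp (-ε * y ^ 2 / (1 + 4 * ε * t)) * (-ε * (2 * y ^ 1) / (1 + 4 * ε * t))) y :=
      (((hasDerivAt_pow 2 y).const_mul (-ε)).div_const (1 + 4 * ε * t)).exp
    have hU := slice_x hud (t / (1 + 4 * ε * t)) (1 + 4 * ε * t) y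
    have := (hE.const_mul ((1 + 4 * ε * t) ^ (-(1 / 2) : ℝ))).mul hU
    refine this.congr_deriv ?_
    field_simp
  -- the function under the outer y-deriv equals F'
  have hfun : (fun y =>
      pdX (fun p => (1 + 4 * ε * p.1) ^ (-(1 / 2) : ℝ) *
        Real.exp (-ε * p.2 ^ 2 / (1 + 4 * ε * p.1)) *
        u (p.1 / (1 + 4 * ε * p.1), p.2 / (1 + 4 * ε * p.1))) t y) =
      (fun y => (1 + 4 * ε * t) ^ (-(1 / 2) : ℝ) * Real.exp (-ε * y ^ 2 / (1 + 4 * ε * t)) *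
        ((-2 * ε * y / (1 + 4 * ε * t)) * u (t / (1 + 4 * ε * t), y / (1 + 4 * ε * t)) +
         (1 / (1 + 4 * ε * t)) * uX u (t / (1 + 4 * ε * t), y / (1 + 4 * ε * t)))) := by
    funext y
    exact (stepA y).deriv
  -- Step B: second x-derivative
  have stepB : HasDerivAt
      (fun y => (1 + 4 * ε * t) ^ (-(1 / 2) : ℝ) * Real.exp (-ε * y ^ 2 / (1 + 4 * ε * t)) *
        ((-2 * ε * y / (1 + 4 * ε * t)) * u (t / (1 + 4 * ε * t), y / (1 + 4 * ε * t)) +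
         (1 / (1 + 4 * ε * t)) * uX u (t / (1 + 4 * ε * t), y / (1 + 4 * ε * t))))
      ((1 + 4 * ε * t) ^ (-(1 / 2) : ℝ) * Real.exp (-ε * x ^ 2 / (1 + 4 * ε * t)) *
        ((4 * ε ^ 2 * x ^ 2 / (1 + 4 * ε * t) ^ 2 - 2 * ε / (1 + 4 * ε * t)) *
            u (t / (1 + 4 * ε * t), x / (1 + 4 * ε * t)) +
          (-(4 * ε * x) / (1 + 4 * ε * t) ^ 2) *
            uX u (t / (1 + 4 * ε * t), x / (1 + 4 * ε * t)) +
          (1 / (1 + 4 * ε * t) ^ 2) *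
            uX (uX u) (t / (1 + 4 * ε * t), x / (1 + 4 * ε * t)))) x := by
    have hE : HasDerivAt (fun y' => Real.exp (-ε * y' ^ 2 / (1 + 4 * ε * t)))
        (Real.exp (-ε * x ^ 2 / (1 + 4 * ε * t)) * (-ε * (2 * x ^ 1) / (1 + 4 * ε * t))) x :=
      (((hasDerivAt_pow 2 x).const_mul (-ε)).div_const (1 + 4 * ε * t)).exp
    have hU := slice_x hud (t / (1 + 4 * ε * t)) (1 + 4 * ε * t) x
    have hUX := slice_x huxd (t / (1 + 4 * ε * t)) (1 + 4 * ε * t) x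
    have hlin : HasDerivAt (fun y => -2 * ε * y / (1 + 4 * ε * t))
        (-2 * ε * 1 / (1 + 4 * ε * t)) x :=
      ((hasDerivAt_id x).const_mul (-2 * ε)).div_const (1 + 4 * ε * t)
    have hG := (hlin.mul hU).add (hUX.const_mul (1 / (1 + 4 * ε * t)))
    have := (hE.const_mul ((1 + 4 * ε * t) ^ (-(1 / 2) : ℝ))).mul hG
    refine this.congr_deriv ?_
    simp only [Pi.mul_apply, Pi.add_apply]
    field_simp
    ring
  -- Step C: t-derivative
  have hDs : HasDerivAt (fun s => 1 + 4 * ε * s) (4 * ε) t := by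
    simpa using ((hasDerivAt_id t).const_mul (4 * ε)).const_add 1
  have hA' := hDs.rpow_const (p := (-(1 / 2) : ℝ)) (Or.inl hD0)
  have hE' : HasDerivAt (fun s => Real.exp (-ε * x ^ 2 / (1 + 4 * ε * s)))
      (Real.exp (-ε * x ^ 2 / (1 + 4 * ε * t)) *
        ((0 * (1 + 4 * ε * t) - -ε * x ^ 2 * (4 * ε)) / (1 + 4 * ε * t) ^ 2)) t :=
    ((hasDerivAt_const t (-ε * x ^ 2)).div hDs hD0).exp
  have hg : HasDerivAt (fun s => s / (1 + 4 * ε * s))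
      ((1 * (1 + 4 * ε * t) - t * (4 * ε)) / (1 + 4 * ε * t) ^ 2) t :=
    (hasDerivAt_id t).div hDs hD0
  have hh : HasDerivAt (fun s => x / (1 + 4 * ε * s))
      ((0 * (1 + 4 * ε * t) - x * (4 * ε)) / (1 + 4 * ε * t) ^ 2) t :=
    (hasDerivAt_const t x).div hDs hD0
  have hU' := slice_t hud hg hh
  have stepC := (hA'.mul hE').mul hU'
  -- put it together
  rw [hfun, stepB.deriv]
  have lhs_eq : deriv (fun s => (1 + 4 * ε * s) ^ (-(1 / 2) : ℝ) *
      Real.exp (-ε * x ^ 2 / (1 + 4 * ε * s)) *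
      u (s / (1 + 4 * ε * s), x / (1 + 4 * ε * s))) t = _ := stepC.deriv
  simp only [Pi.mul_apply] at lhs_eq
  have hpd : pdT (fun p => (1 + 4 * ε * p.1) ^ (-(1 / 2) : ℝ) *
      Real.exp (-ε * p.2 ^ 2 / (1 + 4 * ε * p.1)) *
      u (p.1 / (1 + 4 * ε * p.1), p.2 / (1 + 4 * ε * p.1))) t x =
      deriv (fun s => (1 + 4 * ε * s) ^ (-(1 / 2) : ℝ) *
        Real.exp (-ε * x ^ 2 / (1 + 4 * ε * s)) *
        u (s / (1 + 4 * ε * s), x / (1 + 4 * ε * s))) t := rfl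
  rw [hpd, lhs_eq]
  -- now the algebraic identity
  rw [heat (t / (1 + 4 * ε * t), x / (1 + 4 * ε * t))]
  have hpow : (1 + 4 * ε * t) ^ ((-(1 / 2) : ℝ) - 1) =
      (1 + 4 * ε * t) ^ (-(1 / 2) : ℝ) / (1 + 4 * ε * t) := by
    rw [Real.rpow_sub hD, Real.rpow_one]
  rw [hpow]
  ring
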